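/- For every n, the word P^n(A) is squarefree. -/

import Mathlib

inductive T where
  | A | B | C
deriving DecidableEq, Repr

open T

def P : T → List T
  | A => [A,B,C,B,A,C,B,C,A,B,C,B,A]
  | B => [B,C,A,C,B,A,C,A,B,C,A,C,B]
  | C => [C,A,B,A,C,B,A,B,C,A,B,A,C]

def Pw (w : List T) : List T := w.flatMap P

def SqFree (w : List T) : Prop := ∀ x : List T, x ≠ [] → ¬ (x ++ x) <:+: w

def rot : T → T
  | A => B
  | B => C
  | C => A

def rotw (w : List T) : List T := w.map rot

def refT : T → T
  | A => A
  | B => C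
  | C => B

def reflw (w : List T) : List T := w.map refT

def OccursAt (w v : List T) (i : ℕ) : Prop := (v.drop i).take w.length = w

/-! ### Basic lemmas about `Pw` -/

lemma length_P (a : T) : (P a).length = 13 := by cases a <;> rfl

lemma Pw_cons (a : T) (w : List T) : Pw (a :: w) = P a ++ Pw w := rfl

lemma length_Pw (w : List T) : (Pw w).length = 13 * w.length := by
  induction w with
  | nil => rfl
  | cons a w ih => simp [Pw_cons, length_P, ih]; ring

lemma drop_Pw (u : List T) (q : ℕ) : (Pw u).drop (13 * q) = Pw (u.drop q) := by
  induction q generalizing u with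
  | zero => simp
  | succ q ih =>
    cases u with
    | nil => simp [Pw]
    | cons a w =>
      have h13 : 13 * (q + 1) = 13 + 13 * q := by ring
      rw [Pw_cons, h13, ← List.drop_drop, List.drop_left' (length_P a), ih]
      rfl

lemma take_Pw (u : List T) (q : ℕ) : (Pw u).take (13 * q) = Pw (u.take q) := by
  induction q generalizing u with
  | zero => simp [Pw]
  | succ q ih =>
    cases u with
    | nil => simp [Pw]
    | cons a w =>
      have h13 : 13 * (q + 1) = (P a).length + 13 * q := by rw [length_P]; ring
      rw [Pw_cons, h13, List.take_append, List.take_of_length_le (Nat.le_add_right _ _),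
        Nat.add_sub_cancel_left, ih]
      rfl

lemma getElem?_Pw (u : List T) (a : T) (q r : ℕ) (hq : u[q]? = some a) (hr : r < 13) :
    (Pw u)[13 * q + r]? = (P a)[r]? := by
  induction u generalizing q with
  | nil => simp at hq
  | cons b w ih =>
    cases q with
    | zero =>
      simp only [List.getElem?_cons_zero, Option.some.injEq] at hq
      subst hq
      rw [Pw_cons]
      simpa using List.getElem?_append_left (by rw [length_P]; omega)
    | succ q =>
      simp only [List.getElem?_cons_succ] at hq
      rw [Pw_cons, List.getElem?_append_right (by rw [length_P]; omega)]
      have : 13 * (q + 1) + r - (P b).length = 13 * q + r := by rw [length_P]; omega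
      rw [this, ih q hq]

lemma P_head (a : T) : (P a)[0]? = some a := by cases a <;> rfl

/-! ### Decidable facts -/

lemma F1 (b c a : T) : ∀ r < 13, 0 < r →
    ¬ (∀ t < 13, (P b ++ P c)[r + t]? = (P a)[t]?) := by
  cases b <;> cases c <;> cases a <;> decide

/-! ### Synchronization -/

lemma sync (u : List T) (a : T) (j : ℕ) (hfit : j + 13 ≤ 13 * u.length)
    (hocc : ∀ t < 13, (Pw u)[j + t]? = (P a)[t]?) : j % 13 = 0 := by
  by_contra hr
  set q := j / 13 with hqdef
  set r := j % 13 with hrdef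
  have hr13 : r < 13 := Nat.mod_lt _ (by norm_num)
  have hr0 : 0 < r := Nat.pos_of_ne_zero hr
  have hj : j = 13 * q + r := by omega
  have hqu : q < u.length := by omega
  have hq1u : q + 1 < u.length := by omega
  obtain ⟨b, hb⟩ : ∃ b, u[q]? = some b := ⟨u[q], List.getElem?_eq_getElem hqu⟩
  obtain ⟨c, hc⟩ : ∃ c, u[q+1]? = some c := ⟨u[q+1], List.getElem?_eq_getElem hq1u⟩
  apply F1 b c a r hr13 hr0
  intro t ht
  by_cases hcase : r + t < 13
  · rw [List.getElem?_append_left (by rw [length_P]; omega)]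
    rw [← hocc t ht]
    have : j + t = 13 * q + (r + t) := by omega
    rw [this, getElem?_Pw u b q (r+t) hb hcase]
  · rw [List.getElem?_append_right (by rw [length_P]; omega), length_P]
    rw [← hocc t ht]
    have : j + t = 13 * (q + 1) + (r + t - 13) := by omega
    rw [this, getElem?_Pw u c (q+1) (r+t-13) hc (by omega)]

/-! ### Squarefreeness checker -/

def NoSqP (w : List T) (I M : ℕ) : Prop :=
  ∀ i < I, ∀ m < M, 0 < m → i + 2*m ≤ w.length →
    (w.drop i).take m ≠ (w.drop (i+m)).take m

instance (w : List T) (I M : ℕ) : Decidable (NoSqP w I M) := by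
  unfold NoSqP; infer_instance

lemma noSq_sound' {w : List T} {I M : ℕ} (h : NoSqP w I M)
    (x s t : List T) (hx : x ≠ []) (hw : s ++ (x ++ x) ++ t = w)
    (hI : s.length < I) (hM : x.length < M) : False := by
  set i := s.length
  set m := x.length
  have hdrop : w.drop i = (x ++ x) ++ t := by
    rw [← hw, List.append_assoc, List.drop_left' rfl]
  have htake1 : (w.drop i).take m = x := by
    rw [hdrop, List.append_assoc, List.take_left' rfl]
  have hdrop2 : w.drop (i + m) = x ++ t := by
    rw [← List.drop_drop, hdrop, List.append_assoc, List.drop_left' rfl]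
  have htake2 : (w.drop (i + m)).take m = x := by
    rw [hdrop2, List.take_left' rfl]
  have hlen : i + 2*m ≤ w.length := by
    have := congrArg List.length hw
    simp at this
    omega
  have hm0 : 0 < m := List.length_pos_iff.mpr hx
  exact h i hI m hM hm0 hlen (htake1.trans htake2.symm)

lemma noSq_complete {w : List T} (h : SqFree w) (I M : ℕ) : NoSqP w I M := by
  intro i _ m _ hm0 hlen heq
  set x := (w.drop i).take m with hxdef
  have hxlen : x.length = m := by
    rw [hxdef, List.length_take, List.length_drop]; omega
  apply h x (by intro h0; rw [h0] at hxlen; simp at hxlen; omega)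
  refine ⟨w.take i, (w.drop (i+m)).drop m, ?_⟩
  have e1 : w.drop i = x ++ w.drop (i + m) := by
    conv_lhs => rw [← List.take_append_drop m (w.drop i)]
    rw [List.drop_drop]
  have e2 : w.drop (i+m) = x ++ (w.drop (i+m)).drop m := by
    conv_lhs => rw [← List.take_append_drop m (w.drop (i+m))]
    rw [heq]
  calc w.take i ++ (x ++ x) ++ (w.drop (i+m)).drop m
      = w.take i ++ (x ++ (x ++ (w.drop (i+m)).drop m)) := by simp [List.append_assoc]
    _ = w.take i ++ (x ++ w.drop (i+m)) := by rw [← e2]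
    _ = w.take i ++ w.drop i := by rw [← e1]
    _ = w := List.take_append_drop i w

lemma sqfree_of_noSq {w : List T} (h : NoSqP w (w.length + 1) (w.length + 1)) :
    SqFree w := by
  rintro x hx ⟨s, t, hw⟩
  have hs : s.length + 2 * x.length + t.length = w.length := by
    have := congrArg List.length hw; simp at this; omega
  have hm0 : 0 < x.length := List.length_pos_iff.mpr hx
  exact noSq_sound' h x s t hx hw (by omega) (by omega)

lemma sqfree_infix {u v : List T} (h : SqFree u) (hv : v <:+: u) : SqFree v :=
  fun x hx hxx => h x hx (hxx.trans hv)

/-! ### Enumeration of short words -/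

def allW : ℕ → List (List T)
  | 0 => [[]]
  | n+1 => [] :: (allW n).flatMap (fun w => [A::w, B::w, C::w])

lemma mem_allW : ∀ (n : ℕ) (v : List T), v.length ≤ n → v ∈ allW n := by
  intro n
  induction n with
  | zero =>
    intro v hv
    have : v = [] := List.length_eq_zero_iff.mp (by omega)
    subst this; simp [allW]
  | succ n ih =>
    intro v hv
    cases v with
    | nil => simp [allW]
    | cons a w =>
      simp only [allW, List.mem_cons, List.mem_flatMap]
      right
      refine ⟨w, ih w (by simpa using hv), ?_⟩
      cases a <;> simp

set_option maxRecDepth 40000 in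
set_option maxHeartbeats 4000000 in
lemma L1 : ∀ v ∈ allW 5, NoSqP v 6 6 → NoSqP (Pw v) 13 25 := by decide

lemma small_noSq {v : List T} (h5 : v.length ≤ 5) (hsf : SqFree v) :
    NoSqP (Pw v) 13 25 :=
  L1 v (mem_allW 5 v h5) (noSq_complete hsf 6 6)

/-! ### The long square case -/

lemma long_case (u x g d : List T) (hsf : SqFree u) (hx : 25 ≤ x.length)
    (he : Pw u = g ++ (x ++ (x ++ d))) : False := by
  set i := g.length with hidef
  set m := x.length with hmdef
  have hlen : i + 2 * m + d.length = 13 * u.length := by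
    have := congrArg List.length he
    simp [length_Pw] at this
    omega
  have hpt : ∀ t < m, (Pw u)[i + t]? = x[t]? := by
    intro t ht
    rw [he, List.getElem?_append_right (by omega)]
    have : i + t - g.length = t := by omega
    rw [this, List.getElem?_append_left (by omega)]
  have hpt2 : ∀ t < m, (Pw u)[i + m + t]? = x[t]? := by
    intro t ht
    rw [he, List.getElem?_append_right (by omega)]
    have h1 : i + m + t - g.length = m + t := by omega
    rw [h1, List.getElem?_append_right (by omega)]
    have h2 : m + t - x.length = t := by omega
    rw [h2, List.getElem?_append_left (by omega)]
  -- find an aligned block inside the first copy of x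
  set k := (i + 12) / 13 with hkdef
  have hk1 : i ≤ 13 * k := by omega
  have hk2 : 13 * k ≤ i + 12 := by omega
  have hku : k < u.length := by omega
  obtain ⟨a, ha⟩ : ∃ a, u[k]? = some a := ⟨u[k], List.getElem?_eq_getElem hku⟩
  have hsync : (13 * k + m) % 13 = 0 := by
    apply sync u a (13 * k + m) (by omega)
    intro t ht
    have e1 : 13 * k + m + t = i + m + (13 * k - i + t) := by omega
    rw [e1, hpt2 _ (by omega)]
    rw [← hpt _ (by omega)]
    have e2 : i + (13 * k - i + t) = 13 * k + t := by omega
    rw [e2, getElem?_Pw u a k t ha ht]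
  -- m = 13 * s
  have hdvd : 13 ∣ m := by omega
  obtain ⟨s, hs⟩ := hdvd
  have hs1 : 1 ≤ s := by omega
  -- u has a square of length s starting at k
  have hletters : ∀ j < s, u[k + j]? = u[k + j + s]? := by
    intro j hj
    have hkj : k + j < u.length := by omega
    have hkjs : k + j + s < u.length := by omega
    obtain ⟨b, hb⟩ : ∃ b, u[k+j]? = some b := ⟨_, List.getElem?_eq_getElem hkj⟩
    obtain ⟨c, hc⟩ : ∃ c, u[k+j+s]? = some c := ⟨_, List.getElem?_eq_getElem hkjs⟩
    rw [hb, hc]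
    have e1 : (Pw u)[13 * (k+j) + 0]? = (P b)[0]? := getElem?_Pw u b (k+j) 0 hb (by omega)
    have e2 : (Pw u)[13 * (k+j+s) + 0]? = (P c)[0]? := getElem?_Pw u c (k+j+s) 0 hc (by omega)
    have e3 : (Pw u)[13 * (k+j) + 0]? = (Pw u)[13 * (k+j+s) + 0]? := by
      have f1 : 13 * (k+j) + 0 = i + (13 * k - i + 13 * j) := by omega
      have f2 : 13 * (k+j+s) + 0 = i + m + (13 * k - i + 13 * j) := by omega
      rw [f1, f2, hpt _ (by omega), hpt2 _ (by omega)]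
    calc some b = (P b)[0]? := (P_head b).symm
      _ = (Pw u)[13 * (k+j) + 0]? := e1.symm
      _ = (Pw u)[13 * (k+j+s) + 0]? := e3
      _ = (P c)[0]? := e2
      _ = some c := P_head c
  have hk2s : k + 2 * s ≤ u.length := by omega
  set y := (u.drop k).take s with hydef
  have hylen : y.length = s := by
    rw [hydef, List.length_take, List.length_drop]; omega
  have hyy : (u.drop k).take (2 * s) = y ++ y := by
    apply List.ext_getElem?
    intro n
    rw [List.getElem?_take, List.getElem?_drop]
    by_cases h1 : n < s
    · rw [if_pos (by omega), List.getElem?_append_left (by omega), hydef,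
        List.getElem?_take, if_pos h1, List.getElem?_drop]
    · by_cases h2 : n < 2 * s
      · rw [if_pos h2, List.getElem?_append_right (by omega), hylen, hydef,
          List.getElem?_take, if_pos (by omega), List.getElem?_drop]
        have := (hletters (n - s) (by omega)).symm
        have e : k + (n - s) + s = k + n := by omega
        rw [e] at this
        exact this
      · rw [if_neg h2, List.getElem?_eq_none]
        simp only [List.length_append, hylen]
        omega
  apply hsf y (by intro h0; rw [h0] at hylen; simp at hylen; omega)
  refine ⟨u.take k, (u.drop k).drop (2 * s), ?_⟩
  rw [← hyy, List.append_assoc, List.take_append_drop, List.take_append_drop]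

/-! ### The induction step -/

lemma step {u : List T} (hu : SqFree u) : SqFree (Pw u) := by
  rintro x hx ⟨g, d, he⟩
  rw [List.append_assoc, List.append_assoc] at he
  by_cases hm : 25 ≤ x.length
  · exact long_case u x g d hu hm he.symm
  -- small case
  push_neg at hm
  set i := g.length with hidef
  set q := i / 13 with hqdef
  set r := i % 13 with hrdef
  have hr13 : r < 13 := Nat.mod_lt _ (by norm_num)
  set v := (u.drop q).take 5 with hvdef
  have hv5 : v.length ≤ 5 := by rw [hvdef, List.length_take]; omega
  have hvinf : v <:+: u := by
    refine ⟨u.take q, (u.drop q).drop 5, ?_⟩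
    rw [hvdef, List.append_assoc, List.take_append_drop, List.take_append_drop]
  have hvsf : SqFree v := sqfree_infix hu hvinf
  have hns : NoSqP (Pw v) 13 25 := small_noSq hv5 hvsf
  -- Pw v = ((Pw u).drop (13*q)).take 65
  have hY : Pw v = ((Pw u).drop (13 * q)).take 65 := by
    rw [hvdef, ← take_Pw, ← drop_Pw]
  set Y := Pw v with hYdef
  -- (Pw u).drop i = (x ++ x) ++ d
  have hdropi : (Pw u).drop i = x ++ (x ++ d) := by
    rw [← he, List.drop_left' rfl]
  have hiq : i = 13 * q + r := by omega
  have hYdrop : Y.drop r = x ++ (x ++ (d.take (65 - r - 2 * x.length))) := by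
    rw [hY, List.drop_take]
    have : ((Pw u).drop (13 * q)).drop r = (Pw u).drop i := by
      rw [List.drop_drop]; congr 1; omega
    rw [this, hdropi]
    rw [List.take_append, List.take_of_length_le (by omega),
      List.take_append, List.take_of_length_le (by omega)]
    have e : 65 - r - x.length - x.length = 65 - r - 2 * x.length := by omega
    rw [e]
  have hYfull : Y = Y.take r ++ (x ++ (x ++ (d.take (65 - r - 2 * x.length)))) := by
    rw [← hYdrop, List.take_append_drop]
  have hslen : (Y.take r).length < 13 := by
    rw [List.length_take]; omega
  have hx0 : 0 < x.length := List.length_pos_iff.mpr hx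
  refine noSq_sound' hns x (Y.take r) (d.take (65 - r - 2 * x.length)) hx ?_ hslen (by omega)
  conv_rhs => rw [hYfull]
  simp [List.append_assoc]

theorem stmt5 (n : ℕ) : SqFree (Pw^[n] [A]) := by
  induction n with
  | zero =>
    apply sqfree_of_noSq
    decide
  | succ n ih =>
    rw [Function.iterate_succ_apply']
    exact step ih
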